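/- Let 0 < α₁ < β₁ < ⋯ < α_N < β_N and define z(t) = Σ_{i=1}^N (-k_i) e^{-β_i t} for t ≥ 0, where k_i = (α_i - β_i)·∏_{j≠i}(α_j - β_i)/(β_j - β_i). Then z(t) ≥ 0 for all t ≥ 0 and ∫₀^∞ z(t) dt = 1 - ∏_{i=1}^N α_i/β_i < 1. -/

import Mathlib

open Finset MeasureTheory Polynomial in
lemma my_int_exp {b : ℝ} (hb : 0 < b) :
    ∫ x in Set.Ioi (0:ℝ), Real.exp (-b * x) = 1 / b := by
  have h := integral_Ioi_of_hasDerivAt_of_tendsto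
    (f := fun x => -Real.exp (-b*x)/b) (f' := fun x => Real.exp (-b*x)) (a := 0) (m := 0)
    (Continuous.continuousWithinAt (by continuity)) ?_ (exp_neg_integrableOn_Ioi 0 hb) ?_
  · rw [h]; field_simp; simp
  · intro x _
    have h1 : HasDerivAt (fun x : ℝ => -b * x) (-b) x := by
      simpa using (hasDerivAt_id x).const_mul (-b)
    have := ((Real.hasDerivAt_exp (-b*x)).comp x h1).neg.div_const b
    have hb' : b ≠ 0 := ne_of_gt hb
    convert this using 1
    · rfl
    · rfl
    · rw [mul_neg, neg_neg, mul_div_assoc, div_self hb', mul_one]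
  · have h2 : Filter.Tendsto (fun x : ℝ => -b * x) Filter.atTop Filter.atBot :=
      Filter.tendsto_id.const_mul_atTop_of_neg (neg_neg_iff_pos.mpr hb)
    have : Filter.Tendsto (fun x : ℝ => Real.exp (-b*x)) Filter.atTop (nhds 0) :=
      Real.tendsto_exp_atBot.comp h2
    simpa using (this.neg.div_const b)


open Finset Polynomial in
lemma my_key {N : ℕ} (hN : 1 ≤ N) (α β : Fin N → ℝ)
    (hβinj : Function.Injective β) (hβne : ∀ i, β i ≠ 0)
    (k : Fin N → ℝ)
    (hk : ∀ i, k i = (α i - β i) *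
      ∏ j ∈ Finset.univ.erase i, (α j - β i) / (β j - β i)) :
    ∑ i, (-(k i)) / β i = 1 - ∏ i, α i / β i := by
  classical
  set P : ℝ[X] := ∏ i, (X + C (α i)) with hP
  set Q : ℝ[X] := ∏ i, (X + C (β i)) with hQ
  set R : ℝ[X] := ∑ i, C (k i) * ∏ j ∈ univ.erase i, (X + C (β j)) with hR
  have hPdeg : P.degree = N := by
    rw [hP, degree_prod]; simp
  have hQdeg : Q.degree = N := by
    rw [hQ, degree_prod]; simp
  have hPm : P.Monic := monic_prod_of_monic _ _ fun i _ => monic_X_add_C _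
  have hQm : Q.Monic := monic_prod_of_monic _ _ fun i _ => monic_X_add_C _
  have hsub : (P - Q).degree < ((univ : Finset (Fin N)).card : ℕ) := by
    have := degree_sub_lt (hPdeg.trans hQdeg.symm) hPm.ne_zero (hPm.leadingCoeff.trans hQm.leadingCoeff.symm)
    rw [hPdeg] at this
    simpa using this
  have hRdeg : R.degree < ((univ : Finset (Fin N)).card : ℕ) := by
    rw [card_univ, Fintype.card_fin]
    refine lt_of_le_of_lt (degree_sum_le _ _) ?_
    rw [Finset.sup_lt_iff (by exact_mod_cast WithBot.bot_lt_coe _)]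
    intro i _
    refine lt_of_le_of_lt (degree_mul_le _ _) ?_
    have h1 : (C (k i)).degree ≤ 0 := degree_C_le
    have h2 : (∏ j ∈ univ.erase i, (X + C (β j))).degree ≤ ((N - 1 : ℕ) : WithBot ℕ) := by
      refine le_trans (degree_prod_le _ _) ?_
      rw [Finset.sum_congr rfl (fun j (_ : j ∈ univ.erase i) => degree_X_add_C (β j))]
      simp [card_erase_of_mem (mem_univ i), card_univ]
    refine lt_of_le_of_lt (add_le_add h1 h2) ?_
    rw [zero_add]
    exact_mod_cast Nat.sub_lt (by omega) one_pos
  have heval : ∀ i ∈ (univ : Finset (Fin N)), (P - Q).eval (-(β i)) = R.eval (-(β i)) := by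
    intro i _
    have hQ0 : Q.eval (-(β i)) = 0 := by
      rw [hQ, eval_prod]
      exact Finset.prod_eq_zero (mem_univ i) (by simp)
    have hP0 : P.eval (-(β i)) = ∏ j, (α j - β i) := by
      rw [hP, eval_prod]; congr 1; ext j; simp; ring
    have hR0 : R.eval (-(β i)) = k i * ∏ j ∈ univ.erase i, (β j - β i) := by
      rw [hR, eval_finset_sum]
      rw [Finset.sum_eq_single i]
      · rw [eval_mul, eval_C, eval_prod]
        congr 1
        exact Finset.prod_congr rfl fun j _ => by rw [eval_add, eval_X, eval_C]; ring
      · intro m _ hm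
        have : i ∈ univ.erase m := Finset.mem_erase.mpr ⟨Ne.symm hm, mem_univ i⟩
        simp only [eval_mul, eval_prod]
        rw [Finset.prod_eq_zero this (by simp)]
        ring
      · simp
    rw [eval_sub, hQ0, hP0, hR0, sub_zero]
    have hden : ∀ j ∈ univ.erase i, β j - β i ≠ 0 := by
      intro j hj
      have := (Finset.mem_erase.mp hj).1
      exact sub_ne_zero.mpr fun h => this (hβinj h)
    rw [hk i, Finset.prod_div_distrib]
    rw [mul_assoc, div_mul_cancel₀ _ (Finset.prod_ne_zero_iff.mpr hden)]
    rw [← Finset.mul_prod_erase _ _ (mem_univ i)]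
  have hPQR : P - Q = R :=
    Polynomial.eq_of_degrees_lt_of_eval_index_eq (v := fun i => -(β i)) univ
      (fun i _ j _ h => by have := neg_injective h; exact hβinj this) hsub hRdeg heval
  -- evaluate at 0
  have h0 : (∏ i, α i) - ∏ i, β i = ∑ i, k i * ∏ j ∈ univ.erase i, β j := by
    have := congrArg (Polynomial.eval 0) hPQR
    simpa [hP, hQ, hR, eval_prod, eval_finset_sum] using this
  have hβprod : (∏ i, β i) ≠ 0 := Finset.prod_ne_zero_iff.mpr fun i _ => hβne i
  have step : ∀ i, (-(k i)) / β i = -(k i * ∏ j ∈ univ.erase i, β j) / ∏ j, β j := by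
    intro i
    have hne : (∏ j ∈ univ.erase i, β j) ≠ 0 :=
      Finset.prod_ne_zero_iff.mpr fun j hj => hβne j
    rw [← Finset.mul_prod_erase _ _ (mem_univ i)]
    rw [neg_div, neg_div, neg_inj, mul_div_mul_right _ _ hne]
  rw [Finset.sum_congr rfl fun i _ => step i, ← Finset.sum_div, Finset.sum_neg_distrib, ← h0,
    Finset.prod_div_distrib, neg_sub, sub_div, div_self hβprod]

open Finset MeasureTheory

/-- With interlacing parameters, `z(t) = Σ (-kᵢ) e^{-βᵢ t}` is nonnegative on
`[0,∞)` and `∫₀^∞ z = 1 - ∏ αᵢ/βᵢ < 1`. -/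
theorem stmt9 (N : ℕ) (hN : 1 ≤ N) (α β : Fin N → ℝ)
    (hpos : ∀ i, 0 < α i)
    (hab : ∀ i, α i < β i)
    (hba : ∀ i j : Fin N, i < j → β i < α j)
    (k : Fin N → ℝ)
    (hk : ∀ i, k i = (α i - β i) *
      ∏ j ∈ Finset.univ.erase i, (α j - β i) / (β j - β i))
    (z : ℝ → ℝ) (hz : ∀ t, z t = ∑ i, (-(k i)) * Real.exp (-(β i) * t)) :
    (∀ t : ℝ, 0 ≤ t → 0 ≤ z t) ∧
      (∫ t in Set.Ici (0:ℝ), z t) = 1 - ∏ i, α i / β i ∧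
      (∫ t in Set.Ici (0:ℝ), z t) < 1 := by
  classical
  have hβpos : ∀ i, 0 < β i := fun i => (hpos i).trans (hab i)
  have hβmono : StrictMono β := fun i j hij => (hba i j hij).trans (hab j)
  have hβinj : Function.Injective β := hβmono.injective
  have hratio : ∀ i, ∀ j ∈ Finset.univ.erase i, 0 < (α j - β i) / (β j - β i) := by
    intro i j hj
    have hne : j ≠ i := (Finset.mem_erase.mp hj).1
    rcases lt_or_gt_of_ne hne with h | h
    · have h1 : β j < β i := hβmono h
      have h2 : α j < β i := (hab j).trans h1
      exact div_pos_of_neg_of_neg (by linarith) (by linarith)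
    · have h1 : β i < α j := hba i j h
      have h2 : β i < β j := hβmono h
      exact div_pos (by linarith) (by linarith)
  have hkneg : ∀ i, k i < 0 := by
    intro i
    rw [hk i]
    exact mul_neg_of_neg_of_pos (by linarith [hab i]) (Finset.prod_pos (hratio i))
  have hknn : ∀ i, 0 ≤ -(k i) := fun i => neg_nonneg.mpr (hkneg i).le
  -- the key algebraic identity
  have hkey : ∑ i, (-(k i)) / β i = 1 - ∏ i, α i / β i :=
    my_key hN α β hβinj (fun i => (hβpos i).ne') k hk
  have hI : (∫ t in Set.Ici (0:ℝ), z t) = 1 - ∏ i, α i / β i := by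
    rw [MeasureTheory.integral_Ici_eq_integral_Ioi]
    have hint : ∀ i : Fin N, IntegrableOn
        (fun t => (-(k i)) * Real.exp (-(β i) * t)) (Set.Ioi (0:ℝ)) :=
      fun i => (exp_neg_integrableOn_Ioi 0 (hβpos i)).const_mul _
    calc ∫ t in Set.Ioi (0:ℝ), z t
        = ∫ t in Set.Ioi (0:ℝ), ∑ i, (-(k i)) * Real.exp (-(β i) * t) := by
          exact MeasureTheory.integral_congr_ae (Filter.Eventually.of_forall fun t => hz t)
      _ = ∑ i, ∫ t in Set.Ioi (0:ℝ), (-(k i)) * Real.exp (-(β i) * t) :=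
          MeasureTheory.integral_finset_sum _ fun i _ => hint i
      _ = ∑ i, (-(k i)) / β i := by
          refine Finset.sum_congr rfl fun i _ => ?_
          rw [MeasureTheory.integral_const_mul, my_int_exp (hβpos i)]
          ring
      _ = 1 - ∏ i, α i / β i := hkey
  have h1 : 0 < ∏ i, α i / β i :=
    Finset.prod_pos fun i _ => div_pos (hpos i) (hβpos i)
  exact ⟨fun t _ => by
    rw [hz t]
    exact Finset.sum_nonneg fun i _ => mul_nonneg (hknn i) (Real.exp_pos _).le,
    hI, by rw [hI]; linarith⟩
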